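/- Let f : Ω → ℂ be a nonvanishing scalar C¹ function on an open set Ω ⊆ ℝ³, and let ρ : Ω → ℝ be a harmonic function (Δρ = 0) such that ⟨∇f, ∇ρ⟩ = 0 in Ω. Then the purely vectorial function F = f·Dρ satisfies DF + F·(Df/f) = 0, and G = (1/f)·Dρ satisfies DG − G·(Df/f) = 0. -/

import Mathlib

open Quaternion

noncomputable section

/-- Points of ℝ³. -/
abbrev P3 := EuclideanSpace ℝ (Fin 3)

/-- Partial derivative ∂ₖ of a complex-valued function on ℝ³. -/
def pd (k : Fin 3) (F : P3 → ℂ) : P3 → ℂ :=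
  fun p => fderiv ℝ F p (EuclideanSpace.single k 1)

/-- The Laplacian Δ = ∂₁² + ∂₂² + ∂₃². -/
def lap3 (F : P3 → ℂ) : P3 → ℂ := fun p => ∑ k : Fin 3, pd k (pd k F) p

/-- Embedding of a complex scalar as a quaternion. -/
def qC (z : ℂ) : ℍ[ℂ] := ⟨z, 0, 0, 0⟩

/-- The quaternionic imaginary units e₁, e₂, e₃. -/
def qe : Fin 3 → ℍ[ℂ] := ![⟨0,1,0,0⟩, ⟨0,0,1,0⟩, ⟨0,0,0,1⟩]

/-- The eₖ-components of a quaternion. -/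
def qcomp : Fin 3 → ℍ[ℂ] → ℂ := ![QuaternionAlgebra.imI, QuaternionAlgebra.imJ, QuaternionAlgebra.imK]

/-- Quaternionic conjugation C_H. -/
def CH (q : ℍ[ℂ]) : ℍ[ℂ] := ⟨q.re, -q.imI, -q.imJ, -q.imK⟩

/-- Componentwise partial derivative of a quaternion-valued function. -/
def pdq (k : Fin 3) (W : P3 → ℍ[ℂ]) : P3 → ℍ[ℂ] :=
  fun p => ⟨pd k (fun x => (W x).re) p, pd k (fun x => (W x).imI) p,
            pd k (fun x => (W x).imJ) p, pd k (fun x => (W x).imK) p⟩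

/-- The Dirac (Moisil–Theodorescu) operator D Q = Σₖ eₖ ∂ₖ Q. -/
def Dq (W : P3 → ℍ[ℂ]) : P3 → ℍ[ℂ] := fun p => ∑ k : Fin 3, qe k * pdq k W p

/-- The right Dirac operator Dᵣ Q = Σₖ (∂ₖ Q) eₖ. -/
def Drq (W : P3 → ℍ[ℂ]) : P3 → ℍ[ℂ] := fun p => ∑ k : Fin 3, pdq k W p * qe k

/-- Gradient of a scalar function viewed as a purely vectorial quaternion. -/
def gradq (F : P3 → ℂ) : P3 → ℍ[ℂ] := fun p => ⟨0, pd 0 F p, pd 1 F p, pd 2 F p⟩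

/-- Divergence of (the vector part of) a quaternion-valued function. -/
def divq (W : P3 → ℍ[ℂ]) : P3 → ℂ :=
  fun p => pd 0 (fun x => (W x).imI) p + pd 1 (fun x => (W x).imJ) p + pd 2 (fun x => (W x).imK) p

/-- Rotor (curl) of (the vector part of) a quaternion-valued function. -/
def rotq (W : P3 → ℍ[ℂ]) : P3 → ℍ[ℂ] :=
  fun p => ⟨0,
    pd 1 (fun x => (W x).imK) p - pd 2 (fun x => (W x).imJ) p,
    pd 2 (fun x => (W x).imI) p - pd 0 (fun x => (W x).imK) p,
    pd 0 (fun x => (W x).imJ) p - pd 1 (fun x => (W x).imI) p⟩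

/-- Cross product of the vector parts of two quaternions. -/
def crossq (u v : ℍ[ℂ]) : ℍ[ℂ] :=
  ⟨0, u.imJ * v.imK - u.imK * v.imJ, u.imK * v.imI - u.imI * v.imK, u.imI * v.imJ - u.imJ * v.imI⟩

/-- Bilinear scalar product of the vector parts of two quaternions. -/
def dotq (u v : ℍ[ℂ]) : ℂ := u.imI * v.imI + u.imJ * v.imJ + u.imK * v.imK

/-- `Cⁿ` smoothness of a quaternion-valued function on a set, componentwise. -/
def QContDiffOn (n : ℕ) (W : P3 → ℍ[ℂ]) (Ω : Set P3) : Prop :=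
  ContDiffOn ℝ n (fun p => (W p).re) Ω ∧ ContDiffOn ℝ n (fun p => (W p).imI) Ω ∧
  ContDiffOn ℝ n (fun p => (W p).imJ) Ω ∧ ContDiffOn ℝ n (fun p => (W p).imK) Ω

/-- The pure-quaternion Df/f built from a nonvanishing scalar function f. -/
def DfF (f : P3 → ℂ) : P3 → ℍ[ℂ] := fun p => (f p)⁻¹ • gradq f p

lemma pd_congr {u v : P3 → ℂ} {p : P3} (h : u =ᶠ[nhds p] v) (k : Fin 3) :
    pd k u p = pd k v p := by unfold pd; rw [h.fderiv_eq]

lemma pd_const (c : ℂ) (k : Fin 3) (p : P3) : pd k (fun _ => c) p = 0 := by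
  simp [pd]

lemma pd_mul {u v : P3 → ℂ} {p : P3} (hu : DifferentiableAt ℝ u p)
    (hv : DifferentiableAt ℝ v p) (k : Fin 3) :
    pd k (fun x => u x * v x) p = pd k u p * v p + u p * pd k v p := by
  simp only [pd, fderiv_fun_mul hu hv, ContinuousLinearMap.add_apply,
    ContinuousLinearMap.smul_apply, smul_eq_mul]
  ring

lemma pd_contDiffOn {g : P3 → ℂ} {Ω : Set P3} (hΩ : IsOpen Ω)
    (hg : ContDiffOn ℝ 2 g Ω) (j : Fin 3) : ContDiffOn ℝ 1 (pd j g) Ω := by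
  have h2 : ContDiffOn ℝ ((1:WithTop ℕ∞) + 1) g Ω := by
    exact hg
  have hfd := ((contDiffOn_succ_iff_fderiv_of_isOpen hΩ).1 h2).2.2
  have := (ContinuousLinearMap.apply ℝ ℂ
      (EuclideanSpace.single j (1:ℝ))).contDiff.comp_contDiffOn hfd
  exact this

lemma pd_symm {g : P3 → ℂ} {Ω : Set P3} (hΩ : IsOpen Ω)
    (hg : ContDiffOn ℝ 2 g Ω) {p : P3} (hp : p ∈ Ω) (j k : Fin 3) :
    pd j (pd k g) p = pd k (pd j g) p := by
  have hmem := hΩ.mem_nhds hp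
  have hdf : DifferentiableAt ℝ (fderiv ℝ g) p := by
    have h2 : ContDiffOn ℝ ((1:WithTop ℕ∞) + 1) g Ω := by exact hg
    have hfd := ((contDiffOn_succ_iff_fderiv_of_isOpen hΩ).1 h2).2.2
    exact (hfd.differentiableOn one_ne_zero).differentiableAt hmem
  have key : ∀ v w : P3, fderiv ℝ (fun x => fderiv ℝ g x w) p v
      = fderiv ℝ (fderiv ℝ g) p v w := by
    intro v w
    rw [fderiv_clm_apply hdf (differentiableAt_const w)]
    simp
  have hsymm : IsSymmSndFDerivAt ℝ g p := by
    refine (hg.contDiffAt hmem).isSymmSndFDerivAt ?_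
    norm_num
  show fderiv ℝ (fun x => fderiv ℝ g x (EuclideanSpace.single k 1)) p (EuclideanSpace.single j 1)
      = fderiv ℝ (fun x => fderiv ℝ g x (EuclideanSpace.single j 1)) p (EuclideanSpace.single k 1)
  rw [key, key]
  exact hsymm _ _

lemma gradq_smul_re (c : ℂ) (F : P3 → ℂ) (p : P3) : (c • gradq F p).re = c * 0 := rfl
lemma gradq_smul_imI (c : ℂ) (F : P3 → ℂ) (p : P3) : (c • gradq F p).imI = c * pd 0 F p := rfl
lemma gradq_smul_imJ (c : ℂ) (F : P3 → ℂ) (p : P3) : (c • gradq F p).imJ = c * pd 1 F p := rfl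
lemma gradq_smul_imK (c : ℂ) (F : P3 → ℂ) (p : P3) : (c • gradq F p).imK = c * pd 2 F p := rfl

lemma qe0_re : (qe 0).re = 0 := rfl
lemma qe0_imI : (qe 0).imI = 1 := rfl
lemma qe0_imJ : (qe 0).imJ = 0 := rfl
lemma qe0_imK : (qe 0).imK = 0 := rfl
lemma qe1_re : (qe 1).re = 0 := rfl
lemma qe1_imI : (qe 1).imI = 0 := rfl
lemma qe1_imJ : (qe 1).imJ = 1 := rfl
lemma qe1_imK : (qe 1).imK = 0 := rfl
lemma qe2_re : (qe 2).re = 0 := rfl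
lemma qe2_imI : (qe 2).imI = 0 := rfl
lemma qe2_imJ : (qe 2).imJ = 0 := rfl
lemma qe2_imK : (qe 2).imK = 1 := rfl
lemma qmul_mk_re (a : ℍ[ℂ]) (r i j k : ℂ) :
    (@HMul.hMul ℍ[ℂ] ℍ[ℂ] ℍ[ℂ] _ a ⟨r, i, j, k⟩).re = a.re * r - a.imI * i - a.imJ * j - a.imK * k :=
  Quaternion.re_mul _ _
lemma qmul_mk_imI (a : ℍ[ℂ]) (r i j k : ℂ) :
    (@HMul.hMul ℍ[ℂ] ℍ[ℂ] ℍ[ℂ] _ a ⟨r, i, j, k⟩).imI = a.re * i + a.imI * r + a.imJ * k - a.imK * j :=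
  Quaternion.imI_mul _ _
lemma qmul_mk_imJ (a : ℍ[ℂ]) (r i j k : ℂ) :
    (@HMul.hMul ℍ[ℂ] ℍ[ℂ] ℍ[ℂ] _ a ⟨r, i, j, k⟩).imJ = a.re * j - a.imI * k + a.imJ * r + a.imK * i :=
  Quaternion.imJ_mul _ _
lemma qmul_mk_imK (a : ℍ[ℂ]) (r i j k : ℂ) :
    (@HMul.hMul ℍ[ℂ] ℍ[ℂ] ℍ[ℂ] _ a ⟨r, i, j, k⟩).imK = a.re * k + a.imI * j - a.imJ * i + a.imK * r :=
  Quaternion.imK_mul _ _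

/-- if ρ is harmonic and ⟨∇f, ∇ρ⟩ = 0, then F = fDρ solves
    DF + F·(Df/f) = 0 and G = (1/f)Dρ solves DG − G·(Df/f) = 0. -/
theorem statement18 (Ω : Set P3) (hΩ : IsOpen Ω)
    (f : P3 → ℂ) (hf : ContDiffOn ℝ 1 f Ω) (hf0 : ∀ p ∈ Ω, f p ≠ 0)
    (ρ : P3 → ℝ) (hρ : ContDiffOn ℝ 2 ρ Ω)
    (hharm : ∀ p ∈ Ω, lap3 (fun x => (ρ x : ℂ)) p = 0)
    (horth : ∀ p ∈ Ω, dotq (gradq f p) (gradq (fun x => (ρ x : ℂ)) p) = 0) :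
    ∀ p ∈ Ω,
      (Dq (fun x => f x • gradq (fun y => (ρ y : ℂ)) x) p
          + (f p • gradq (fun y => (ρ y : ℂ)) p) * DfF f p = 0) ∧
      (Dq (fun x => (f x)⁻¹ • gradq (fun y => (ρ y : ℂ)) x) p
          - ((f p)⁻¹ • gradq (fun y => (ρ y : ℂ)) p) * DfF f p = 0) := by
  intro p hp
  have hmem : Ω ∈ nhds p := hΩ.mem_nhds hp
  set ρc : P3 → ℂ := fun x => (ρ x : ℂ) with hρcdef
  have hρc : ContDiffOn ℝ 2 ρc Ω := Complex.ofRealCLM.contDiff.comp_contDiffOn hρ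
  have hfd : DifferentiableAt ℝ f p := (hf.differentiableOn one_ne_zero).differentiableAt hmem
  have hbd : ∀ j, DifferentiableAt ℝ (pd j ρc) p := fun j =>
    ((pd_contDiffOn hΩ hρc j).differentiableOn one_ne_zero).differentiableAt hmem
  have hf0p : f p ≠ 0 := hf0 p hp
  have hid : DifferentiableAt ℝ (fun x => (f x)⁻¹) p := hfd.inv hf0p
  have hinv : ∀ k, pd k (fun x => (f x)⁻¹) p = -((f p)⁻¹ * (f p)⁻¹ * pd k f p) := by
    intro k
    have hne : ∀ᶠ x in nhds p, f x ≠ 0 := hfd.continuousAt.eventually_ne hf0p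
    have h1 : pd k (fun x => f x * (f x)⁻¹) p = 0 := by
      rw [pd_congr (v := fun _ => (1:ℂ)) ?_ k, pd_const]
      filter_upwards [hne] with x hx
      exact mul_inv_cancel₀ hx
    have h2 := pd_mul hfd hid k
    rw [h1] at h2
    have h3 : f p * pd k (fun x => (f x)⁻¹) p = -(pd k f p * (f p)⁻¹) := by
      linear_combination -h2
    refine mul_left_cancel₀ hf0p ?_
    rw [h3]
    field_simp
  have hFc : ∀ k j, pd k (fun x => f x * pd j ρc x) p
      = pd k f p * pd j ρc p + f p * pd k (pd j ρc) p := fun k j => pd_mul hfd (hbd j) k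
  have hGc : ∀ k j, pd k (fun x => (f x)⁻¹ * pd j ρc x) p
      = -((f p)⁻¹ * (f p)⁻¹ * pd k f p) * pd j ρc p + (f p)⁻¹ * pd k (pd j ρc) p := by
    intro k j
    rw [pd_mul hid (hbd j) k, hinv k]
  have hH : pd 0 (pd 0 ρc) p + pd 1 (pd 1 ρc) p + pd 2 (pd 2 ρc) p = 0 := by
    have := hharm p hp
    simpa [lap3, Fin.sum_univ_three] using this
  have hO : pd 0 f p * pd 0 ρc p + pd 1 f p * pd 1 ρc p + pd 2 f p * pd 2 ρc p = 0 := by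
    have := horth p hp
    simpa [dotq, gradq] using this
  have hS := fun j k => pd_symm hΩ hρc hp j k
  have hfi : f p * (f p)⁻¹ = 1 := mul_inv_cancel₀ hf0p
  constructor
  · simp only [Dq, pdq, DfF, gradq_smul_re, gradq_smul_imI, gradq_smul_imJ, gradq_smul_imK, smul_eq_mul, mul_zero,
      Fin.sum_univ_three]
    simp only [hFc, pd_const]
    apply Quaternion.ext <;>
      simp only [qmul_mk_re, qmul_mk_imI, qmul_mk_imJ, qmul_mk_imK, qe0_re, qe0_imI, qe0_imJ, qe0_imK, qe1_re, qe1_imI, qe1_imJ, qe1_imK, qe2_re, qe2_imI, qe2_imJ, qe2_imK, Matrix.cons_val_zero, Matrix.cons_val_one, Matrix.head_cons,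
        Matrix.cons_val_two, Matrix.tail_cons, Quaternion.re_add, Quaternion.imI_add,
        Quaternion.imJ_add, Quaternion.imK_add, Quaternion.re_mul, Quaternion.imI_mul,
        Quaternion.imJ_mul, Quaternion.imK_mul, gradq_smul_re, gradq_smul_imI,
        gradq_smul_imJ, gradq_smul_imK, smul_eq_mul, Quaternion.re_zero,
        Quaternion.imI_zero, Quaternion.imJ_zero, Quaternion.imK_zero, Quaternion.re_sub, Quaternion.imI_sub, Quaternion.imJ_sub, Quaternion.imK_sub]
    · linear_combination (-1 - f p * (f p)⁻¹) * hO - f p * hH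
    · linear_combination f p * hS 1 2 +
        (pd 2 f p * pd 1 ρc p - pd 1 f p * pd 2 ρc p) * hfi
    · linear_combination (-(f p)) * hS 0 2 +
        (pd 0 f p * pd 2 ρc p - pd 2 f p * pd 0 ρc p) * hfi
    · linear_combination f p * hS 0 1 +
        (pd 1 f p * pd 0 ρc p - pd 0 f p * pd 1 ρc p) * hfi
  · simp only [Dq, pdq, DfF, gradq_smul_re, gradq_smul_imI, gradq_smul_imJ, gradq_smul_imK, smul_eq_mul, mul_zero,
      Fin.sum_univ_three]
    simp only [hGc, pd_const]
    apply Quaternion.ext <;>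
      simp only [qmul_mk_re, qmul_mk_imI, qmul_mk_imJ, qmul_mk_imK, qe0_re, qe0_imI, qe0_imJ, qe0_imK, qe1_re, qe1_imI, qe1_imJ, qe1_imK, qe2_re, qe2_imI, qe2_imJ, qe2_imK, Matrix.cons_val_zero, Matrix.cons_val_one, Matrix.head_cons,
        Matrix.cons_val_two, Matrix.tail_cons, Quaternion.re_add, Quaternion.imI_add,
        Quaternion.imJ_add, Quaternion.imK_add, Quaternion.re_mul, Quaternion.imI_mul,
        Quaternion.imJ_mul, Quaternion.imK_mul, gradq_smul_re, gradq_smul_imI,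
        gradq_smul_imJ, gradq_smul_imK, smul_eq_mul, Quaternion.re_zero,
        Quaternion.imI_zero, Quaternion.imJ_zero, Quaternion.imK_zero, Quaternion.re_sub, Quaternion.imI_sub, Quaternion.imJ_sub, Quaternion.imK_sub]
    · linear_combination (2 * (f p)⁻¹ * (f p)⁻¹) * hO - (f p)⁻¹ * hH
    · linear_combination (f p)⁻¹ * hS 1 2
    · linear_combination (-(f p)⁻¹) * hS 0 2
    · linear_combination (f p)⁻¹ * hS 0 1
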